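/- Let Γ and Σ be finite connected graphs, Γ bipartite and Σ R-thick (with two distinct vertices z₁, z₂ having the same open neighbourhood). Then the strong product Γ ⊠ Σ admits a nontrivial TF-morphism, hence is unstable. -/

import Mathlib

def IsTF {V : Type*} (G : SimpleGraph V) (α β : Equiv.Perm V) : Prop :=
  ∀ u v : V, G.Adj u v → G.Adj (α u) (β v)

def IsTFS {V : Type*} (G : SimpleGraph V) (α β : Equiv.Perm V) : Prop :=
  (∀ u : V, G.Adj (α u) (β u)) ∧
    ∀ u v : V, G.Adj u v → G.Adj (α u) (β v) ∨ α u = β v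
def strongProd {V W : Type*} (G : SimpleGraph V) (H : SimpleGraph W) :
    SimpleGraph (V × W) where
  Adj p q := (p.1 = q.1 ∧ H.Adj p.2 q.2) ∨ (G.Adj p.1 q.1 ∧ H.Adj p.2 q.2) ∨
    (G.Adj p.1 q.1 ∧ p.2 = q.2)
  symm := by
    constructor
    rintro p q (⟨h1, h2⟩ | ⟨h1, h2⟩ | ⟨h1, h2⟩)
    · exact Or.inl ⟨h1.symm, h2.symm⟩
    · exact Or.inr (Or.inl ⟨h1.symm, h2.symm⟩)
    · exact Or.inr (Or.inr ⟨h1.symm, h2.symm⟩)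
  loopless := by
    constructor
    rintro p (⟨_, h2⟩ | ⟨h1, _⟩ | ⟨h1, _⟩)
    · exact H.irrefl h2
    · exact G.irrefl h1
    · exact G.irrefl h1

def semiStrongProd {V W : Type*} (G : SimpleGraph V) (H : SimpleGraph W) :
    SimpleGraph (V × W) where
  Adj p q := (G.Adj p.1 q.1 ∨ p.1 = q.1) ∧ H.Adj p.2 q.2
  symm := by
    constructor
    rintro p q ⟨h1 | h1, h2⟩
    · exact ⟨Or.inl h1.symm, h2.symm⟩
    · exact ⟨Or.inr h1.symm, h2.symm⟩
  loopless := by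
    constructor
    rintro p ⟨_, h2⟩
    exact H.irrefl h2

def lexProd {V W : Type*} (G : SimpleGraph V) (H : SimpleGraph W) :
    SimpleGraph (V × W) where
  Adj p q := G.Adj p.1 q.1 ∨ (p.1 = q.1 ∧ H.Adj p.2 q.2)
  symm := by
    constructor
    rintro p q (h | ⟨h1, h2⟩)
    · exact Or.inl h.symm
    · exact Or.inr ⟨h1.symm, h2.symm⟩
  loopless := by
    constructor
    rintro p (h | ⟨_, h2⟩)
    · exact G.irrefl h
    · exact H.irrefl h2

def directProd {V W : Type*} (G : SimpleGraph V) (H : SimpleGraph W) :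
    SimpleGraph (V × W) where
  Adj p q := G.Adj p.1 q.1 ∧ H.Adj p.2 q.2
  symm := by
    constructor
    rintro p q ⟨h1, h2⟩
    exact ⟨h1.symm, h2.symm⟩
  loopless := by
    constructor
    rintro p ⟨h1, _⟩
    exact G.irrefl h1

theorem stmt11 {V W : Type*} [Fintype V] [Fintype W]
    (G : SimpleGraph V) (H : SimpleGraph W)
    (hGc : G.Connected) (hHc : H.Connected)
    (hGbip : G.Colorable 2)
    (hthick : ∃ z₁ z₂ : W, z₁ ≠ z₂ ∧ H.neighborSet z₁ = H.neighborSet z₂) :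
    ∃ κ τ : Equiv.Perm (V × W), IsTF (strongProd G H) κ τ ∧ κ ≠ τ := by
  classical
  obtain ⟨z₁, z₂, hz, hN⟩ := hthick
  obtain ⟨C⟩ := hGbip
  set σ := Equiv.swap z₁ z₂ with hσdef
  have h12 : ∀ w, H.Adj z₁ w ↔ H.Adj z₂ w := by
    intro w
    constructor <;> intro h
    · have : w ∈ H.neighborSet z₂ := hN ▸ h
      exact this
    · have : w ∈ H.neighborSet z₁ := hN.symm ▸ h
      exact this
  have hA1 : ∀ x y, H.Adj x y → H.Adj (σ x) y := by
    intro x y hxy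
    by_cases hx1 : x = z₁
    · subst hx1
      rw [hσdef, Equiv.swap_apply_left]
      exact (h12 y).mp hxy
    · by_cases hx2 : x = z₂
      · subst hx2
        rw [hσdef, Equiv.swap_apply_right]
        exact (h12 y).mpr hxy
      · rw [hσdef, Equiv.swap_apply_of_ne_of_ne hx1 hx2]
        exact hxy
  have hA2 : ∀ x y, H.Adj x y → H.Adj (σ x) (σ y) := by
    intro x y hxy
    exact (hA1 y (σ x) (hA1 x y hxy).symm).symm
  have hfinv : Function.Involutive (fun p : V × W => (p.1, if C p.1 = 0 then σ p.2 else p.2)) := by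
    intro p
    dsimp only
    split <;> simp [hσdef, Equiv.swap_apply_self]
  have hginv : Function.Involutive (fun p : V × W => (p.1, if C p.1 = 0 then p.2 else σ p.2)) := by
    intro p
    dsimp only
    split <;> simp [hσdef, Equiv.swap_apply_self]
  refine ⟨hfinv.toPerm _, hginv.toPerm _, ?_, ?_⟩
  · rintro ⟨a, x⟩ ⟨b, y⟩ h
    have hone : ∀ i : Fin 2, i ≠ 0 → i = 1 := by decide
    show (strongProd G H).Adj (a, if C a = 0 then σ x else x) (b, if C b = 0 then y else σ y)
    rcases h with ⟨hab, hxy⟩ | ⟨hab, hxy⟩ | ⟨hab, hxy⟩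
    · -- a = b, x ~ y
      cases hab
      by_cases hc : C a = 0
      · simp only [hc, if_pos]
        exact Or.inl ⟨rfl, hA1 x y hxy⟩
      · simp only [hc, if_neg, ite_false]
        exact Or.inl ⟨rfl, (hA1 y x hxy.symm).symm⟩
    · -- a ~ b, x ~ y
      have hcc : C a ≠ C b := C.valid hab
      by_cases hc : C a = 0
      · have hcb : ¬ C b = 0 := fun hb => hcc (hc.trans hb.symm)
        simp only [hc, hcb, if_pos, if_neg, ite_false]
        exact Or.inr (Or.inl ⟨hab, hA2 x y hxy⟩)
      · have hcb : C b = 0 := by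
          by_contra hb
          exact hcc ((hone _ hc).trans (hone _ hb).symm)
        simp only [hc, hcb, ite_false, if_pos]
        exact Or.inr (Or.inl ⟨hab, hxy⟩)
    · -- a ~ b, x = y
      cases hxy
      have hcc : C a ≠ C b := C.valid hab
      by_cases hc : C a = 0
      · have hcb : ¬ C b = 0 := fun hb => hcc (hc.trans hb.symm)
        simp only [hc, hcb, if_pos, ite_false]
        exact Or.inr (Or.inr ⟨hab, rfl⟩)
      · have hcb : C b = 0 := by
          by_contra hb
          exact hcc ((hone _ hc).trans (hone _ hb).symm)
        simp only [hc, hcb, ite_false, if_pos]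
        exact Or.inr (Or.inr ⟨hab, rfl⟩)
  · intro hEq
    obtain ⟨a⟩ := hGc.nonempty
    have := congrArg (fun e : Equiv.Perm (V × W) => e (a, z₁)) hEq
    simp only [Function.Involutive.coe_toPerm] at this
    by_cases hc : C a = 0
    · simp only [hc, if_pos, Prod.mk.injEq] at this
      exact hz (by simpa [hσdef, Equiv.swap_apply_left] using this.2.symm)
    · simp only [hc, ite_false, Prod.mk.injEq] at this
      exact hz (by simpa [hσdef, Equiv.swap_apply_left] using this.2)
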